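/- Let m be a positive integer, n and r integers, δ ∈ {+1, -1}, and let c = c₁·c₂ with c₁, c₂ positive integers satisfying gcd(c₁, c₂) = 1. Then H^δ_{m,c}(n,r) = H^δ_{m·c₁, c₂}(n·⎯c₁, r) · H^δ_{m·c₂, c₁}(n·⎯c₂, r), where ⎯c₁ is any integer inverse of c₁ modulo c₂ and ⎯c₂ is any integer inverse of c₂ modulo c₁. -/

import Mathlib

open Finset

/-- `e(x) = exp(2πix)`. -/
noncomputable def e (x : ℝ) : ℂ := Complex.exp (2 * Real.pi * Complex.I * x)

/-- A canonical integer inverse of `x` modulo `c`. -/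
noncomputable def zinv (c : ℕ) (x : ℤ) : ℤ := (((x : ZMod c)⁻¹).val : ℤ)

/-- The Kloosterman-type sum `H^δ_{m,c}(n,r)`. -/
noncomputable def Hkl (δ : ℤ) (m c : ℕ) (n r : ℤ) : ℂ :=
  ∑ ρ ∈ Finset.range c,
    if Nat.Coprime ρ c then
      e (((n * (zinv c (ρ : ℤ) + (ρ : ℤ)) : ℤ) : ℝ) / (c : ℝ)) *
        ∑ l ∈ Finset.range c,
          e ((((m : ℤ) * zinv c (ρ : ℤ) * (l : ℤ) ^ 2 +
              r * (zinv c (ρ : ℤ) + δ) * (l : ℤ) : ℤ) : ℝ) / (c : ℝ))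
    else 0

/-- `ε_c = 1` for `c ≡ 1 mod 4` and `ε_c = i` for `c ≡ 3 mod 4`. -/
noncomputable def epsC (c : ℕ) : ℂ := if c % 4 = 1 then 1 else Complex.I

/-- The classical Kloosterman sum `S(u,v;c)`. -/
noncomputable def Kl (u v : ℤ) (c : ℕ) : ℂ :=
  ∑ x ∈ Finset.range c,
    if Nat.Coprime x c then e (((u * (x : ℤ) + v * zinv c (x : ℤ) : ℤ) : ℝ) / (c : ℝ)) else 0

/-- Fundamental discriminant. -/
def IsFundamentalDiscriminant (D : ℤ) : Prop :=
  (D % 4 = 1 ∧ Squarefree D) ∨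
    (∃ d : ℤ, D = 4 * d ∧ (d % 4 = 2 ∨ d % 4 = 3) ∧ Squarefree d)


lemma e_add (x y : ℝ) : e (x + y) = e x * e y := by
  rw [e, e, e, ← Complex.exp_add]; push_cast; ring_nf

lemma e_int (k : ℤ) : e (k : ℝ) = 1 := by
  rw [e]
  have h : (2 * (Real.pi:ℂ) * Complex.I) * ((k : ℝ) : ℂ) = (k:ℂ) * (2 * Real.pi * Complex.I) := by
    push_cast; ring
  rw [h, Complex.exp_int_mul_two_pi_mul_I]

noncomputable def EZ (c : ℕ) (a : ℤ) : ℂ := e ((a : ℝ) / (c : ℝ))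

lemma EZ_add (c : ℕ) (a b : ℤ) : EZ c (a + b) = EZ c a * EZ c b := by
  rw [EZ, EZ, EZ, ← e_add]; congr 1; push_cast; ring

lemma EZ_congr {c : ℕ} (hc : c ≠ 0) {a b : ℤ} (h : (a : ZMod c) = (b : ZMod c)) :
    EZ c a = EZ c b := by
  rw [ZMod.intCast_eq_intCast_iff] at h
  obtain ⟨t, ht⟩ := h.dvd
  have hb : b = a + c * t := by linarith
  subst hb
  have h2 : ((a + (c:ℤ) * t : ℤ) : ℝ) / (c : ℝ) = (a : ℝ) / c + ((t:ℤ) : ℝ) := by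
    have : (c:ℝ) ≠ 0 := Nat.cast_ne_zero.mpr hc
    push_cast; field_simp
  rw [EZ, EZ, h2, e_add, e_int, mul_one]

lemma EZ_split {c₁ c₂ : ℕ} (h1 : c₁ ≠ 0) (h2 : c₂ ≠ 0) (hcop : Nat.Coprime c₁ c₂) {M₁ M₂ : ℤ}
    (hM₁ : (c₁:ℤ) * M₁ ≡ 1 [ZMOD (c₂:ℤ)]) (hM₂ : (c₂:ℤ) * M₂ ≡ 1 [ZMOD (c₁:ℤ)]) (a : ℤ) :
    EZ (c₁ * c₂) a = EZ c₂ (M₁ * a) * EZ c₁ (M₂ * a) := by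
  have hd1 : (c₁:ℤ) ∣ (c₁ * M₁ + c₂ * M₂ - 1) := by
    have h := hM₂.dvd  -- ↑c₁ ∣ 1 - c₂*M₂
    have : (c₁:ℤ) * M₁ + c₂ * M₂ - 1 = c₁ * M₁ - (1 - c₂ * M₂) := by ring
    rw [this]
    exact dvd_sub (Dvd.intro _ rfl) h
  have hd2 : (c₂:ℤ) ∣ (c₁ * M₁ + c₂ * M₂ - 1) := by
    have h := hM₁.dvd
    have : (c₁:ℤ) * M₁ + c₂ * M₂ - 1 = c₂ * M₂ - (1 - c₁ * M₁) := by ring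
    rw [this]
    exact dvd_sub (Dvd.intro _ rfl) h
  have hcd : IsCoprime (c₁:ℤ) (c₂:ℤ) := hcop.isCoprime
  obtain ⟨t, ht⟩ := hcd.mul_dvd hd1 hd2
  symm
  rw [EZ, EZ, EZ, ← e_add]
  have hre : (c₁:ℝ) * M₁ + c₂ * M₂ - 1 = c₁ * c₂ * t := by exact_mod_cast congrArg (Int.cast : ℤ → ℝ) ht
  have key : ((M₁ * a : ℤ) : ℝ) / (c₂:ℝ) + ((M₂ * a : ℤ) : ℝ) / (c₁:ℝ)
      = ((a:ℤ):ℝ) / ((c₁ * c₂ : ℕ) : ℝ) + ((a * t : ℤ) : ℝ) := by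
    have h1' : (c₁:ℝ) ≠ 0 := Nat.cast_ne_zero.mpr h1
    have h2' : (c₂:ℝ) ≠ 0 := Nat.cast_ne_zero.mpr h2
    push_cast
    field_simp
    linear_combination (a:ℝ) * hre
  rw [key, e_add, e_int, mul_one]

lemma sum_zmod (c : ℕ) [NeZero c] (f : ℕ → ℂ) :
    ∑ x ∈ Finset.range c, f x = ∑ y : ZMod c, f y.val := by
  refine Finset.sum_nbij' (fun x => ((x : ℕ) : ZMod c)) (fun y => y.val) ?_ ?_ ?_ ?_ ?_
  · intro a _; exact Finset.mem_univ _
  · intro y _; exact Finset.mem_range.mpr (ZMod.val_lt y)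
  · intro a ha; exact ZMod.val_cast_of_lt (Finset.mem_range.mp ha)
  · intro y _; exact ZMod.natCast_rightInverse y
  · intro a ha; rw [ZMod.val_cast_of_lt (Finset.mem_range.mp ha)]

open scoped Classical in
noncomputable def Gg (δ : ℤ) (m c : ℕ) (n r : ℤ) (ρ l : ZMod c) : ℂ :=
  if IsUnit ρ then
    EZ c (n * (((ρ⁻¹).val : ℤ) + ((ρ).val : ℤ))) *
      EZ c ((m : ℤ) * ((ρ⁻¹).val : ℤ) * ((l).val : ℤ) ^ 2 +
        r * (((ρ⁻¹).val : ℤ) + δ) * ((l).val : ℤ))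
  else 0

lemma Hkl_eq (δ : ℤ) (m c : ℕ) (n r : ℤ) [NeZero c] :
    Hkl δ m c n r = ∑ ρ : ZMod c, ∑ l : ZMod c, Gg δ m c n r ρ l := by
  rw [Hkl, sum_zmod]
  refine Finset.sum_congr rfl fun y _ => ?_
  have hyv : ((y.val : ℕ) : ZMod c) = y := ZMod.natCast_rightInverse y
  have hcast : (((y.val : ℕ) : ℤ) : ZMod c) = y := by push_cast [hyv]; rfl
  have hz : zinv c ((y.val : ℕ) : ℤ) = ((y⁻¹).val : ℤ) := by rw [zinv, hcast]
  have hiff : Nat.Coprime y.val c ↔ IsUnit y := by rw [← ZMod.isUnit_iff_coprime, hyv]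
  by_cases hu : IsUnit y
  · have hcp : Nat.Coprime y.val c := hiff.mpr hu
    rw [if_pos hcp, sum_zmod c, Finset.mul_sum]
    refine Finset.sum_congr rfl fun l _ => ?_
    rw [Gg, if_pos hu, hz]
    rfl
  · have hcp : ¬ Nat.Coprime y.val c := fun h => hu (hiff.mp h)
    rw [if_neg hcp]
    simp [Gg, if_neg hu]

lemma prod_isUnit {M N : Type*} [Monoid M] [Monoid N] (p : M × N) :
    IsUnit p ↔ IsUnit p.1 ∧ IsUnit p.2 := by
  constructor
  · intro h
    exact ⟨h.map (MonoidHom.fst M N), h.map (MonoidHom.snd M N)⟩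
  · rintro ⟨⟨u, hu⟩, ⟨v, hv⟩⟩
    refine ⟨⟨(↑u, ↑v), (↑u⁻¹, ↑v⁻¹), ?_, ?_⟩, ?_⟩
    · ext <;> simp
    · ext <;> simp
    · show ((↑u, ↑v) : M × N) = p
      rw [hu, hv]

lemma sum_prod_mul {α β : Type*} [Fintype α] [Fintype β] (f : β → ℂ) (g : α → ℂ) :
    ∑ p : α × β, f p.2 * g p.1 = (∑ b, f b) * (∑ a, g a) := by
  rw [Fintype.sum_prod_type]
  simp_rw [← Finset.sum_mul]
  rw [← Finset.mul_sum]


set_option maxHeartbeats 1000000 in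
/-- Twisted multiplicativity of the Kloosterman-type sums. -/
theorem statement9 (m : ℕ) (hm : 0 < m) (n r δ : ℤ) (hδ : δ = 1 ∨ δ = -1)
    (c c₁ c₂ : ℕ) (hc₁ : 0 < c₁) (hc₂ : 0 < c₂) (hc : c = c₁ * c₂)
    (hcop : Nat.Coprime c₁ c₂)
    (M₁ M₂ : ℤ) (hM₁ : (c₁ : ℤ) * M₁ ≡ 1 [ZMOD (c₂ : ℤ)])
    (hM₂ : (c₂ : ℤ) * M₂ ≡ 1 [ZMOD (c₁ : ℤ)]) :
    Hkl δ m c n r = Hkl δ (m * c₁) c₂ (n * M₁) r * Hkl δ (m * c₂) c₁ (n * M₂) r := by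
  have hc₁0 : c₁ ≠ 0 := hc₁.ne'
  have hc₂0 : c₂ ≠ 0 := hc₂.ne'
  haveI : NeZero c₁ := ⟨hc₁0⟩
  haveI : NeZero c₂ := ⟨hc₂0⟩
  subst hc
  haveI : NeZero (c₁ * c₂) := ⟨Nat.mul_ne_zero hc₁0 hc₂0⟩
  set φ := ZMod.chineseRemainder hcop with hφ
  have hcast1 : ∀ x : ZMod (c₁ * c₂), ((x.val : ℕ) : ZMod c₁) = (φ x).1 := by
    intro x
    have h := RingHom.ext_zmod ((RingHom.fst (ZMod c₁) (ZMod c₂)).comp φ.toRingHom)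
      (ZMod.castHom (dvd_mul_right c₁ c₂) (ZMod c₁))
    have h2 := DFunLike.congr_fun h x
    simp only [RingHom.comp_apply, RingHom.coe_fst, RingEquiv.coe_toRingHom,
      ZMod.castHom_apply, RingEquiv.toRingHom_eq_coe, RingHom.coe_coe] at h2
    rw [ZMod.natCast_val, ← h2]
  have hcast2 : ∀ x : ZMod (c₁ * c₂), ((x.val : ℕ) : ZMod c₂) = (φ x).2 := by
    intro x
    have h := RingHom.ext_zmod ((RingHom.snd (ZMod c₁) (ZMod c₂)).comp φ.toRingHom)
      (ZMod.castHom (dvd_mul_left c₂ c₁) (ZMod c₂))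
    have h2 := DFunLike.congr_fun h x
    simp only [RingHom.comp_apply, RingHom.coe_snd, RingEquiv.coe_toRingHom,
      ZMod.castHom_apply, RingEquiv.toRingHom_eq_coe, RingHom.coe_coe] at h2
    rw [ZMod.natCast_val, ← h2]
  have hinv1 : ∀ x : ZMod (c₁ * c₂), IsUnit x → (((x⁻¹).val : ℕ) : ZMod c₁) = ((φ x).1)⁻¹ := by
    intro x hx
    rw [hcast1 x⁻¹]
    symm
    apply ZMod.inv_eq_of_mul_eq_one
    have hxx : x * x⁻¹ = 1 := ZMod.mul_inv_of_unit x hx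
    have : φ x * φ x⁻¹ = 1 := by rw [← map_mul, hxx, map_one]
    calc (φ x).1 * (φ x⁻¹).1 = (φ x * φ x⁻¹).1 := (Prod.fst_mul _ _).symm
      _ = 1 := by rw [this, Prod.fst_one]
  have hinv2 : ∀ x : ZMod (c₁ * c₂), IsUnit x → (((x⁻¹).val : ℕ) : ZMod c₂) = ((φ x).2)⁻¹ := by
    intro x hx
    rw [hcast2 x⁻¹]
    symm
    apply ZMod.inv_eq_of_mul_eq_one
    have hxx : x * x⁻¹ = 1 := ZMod.mul_inv_of_unit x hx
    have : φ x * φ x⁻¹ = 1 := by rw [← map_mul, hxx, map_one]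
    calc (φ x).2 * (φ x⁻¹).2 = (φ x * φ x⁻¹).2 := (Prod.snd_mul _ _).symm
      _ = 1 := by rw [this, Prod.snd_one]
  have hunit : ∀ x : ZMod (c₁ * c₂), IsUnit x ↔ IsUnit (φ x).1 ∧ IsUnit (φ x).2 := by
    intro x
    rw [← prod_isUnit]
    constructor
    · intro h
      have := h.map φ.toRingHom
      simpa using this
    · intro h
      have := h.map φ.symm.toRingHom
      simpa using this
  have hc₁M₁ : (c₁ : ZMod c₂) * (M₁ : ZMod c₂) = 1 := by
    have h := (ZMod.intCast_eq_intCast_iff _ _ _).mpr hM₁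
    push_cast at h
    exact h
  have hc₂M₂ : (c₂ : ZMod c₁) * (M₂ : ZMod c₁) = 1 := by
    have h := (ZMod.intCast_eq_intCast_iff _ _ _).mpr hM₂
    push_cast at h
    exact h
  have hUM₁ : IsUnit (M₁ : ZMod c₂) :=
    IsUnit.of_mul_eq_one _ (by rw [mul_comm]; exact hc₁M₁)
  have hUM₂ : IsUnit (M₂ : ZMod c₁) :=
    IsUnit.of_mul_eq_one _ (by rw [mul_comm]; exact hc₂M₂)
  have key : ∀ p q : ZMod c₁ × ZMod c₂,
      Gg δ m (c₁ * c₂) n r (φ.symm p) (φ.symm q) =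
        Gg δ (m * c₁) c₂ (n * M₁) r p.2 ((M₁ : ZMod c₂) * q.2) *
          Gg δ (m * c₂) c₁ (n * M₂) r p.1 ((M₂ : ZMod c₁) * q.1) := by
    intro p q
    set x := φ.symm p with hxdef
    set y := φ.symm q with hydef
    have hpx : φ x = p := RingEquiv.apply_symm_apply φ p
    have hqy : φ y = q := RingEquiv.apply_symm_apply φ q
    by_cases hxu : IsUnit x
    · obtain ⟨hu1, hu2⟩ := (hpx ▸ (hunit x).mp hxu : IsUnit p.1 ∧ IsUnit p.2)
      rw [Gg, if_pos hxu, Gg, if_pos hu2, Gg, if_pos hu1]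
      rw [EZ_split hc₁0 hc₂0 hcop hM₁ hM₂, EZ_split hc₁0 hc₂0 hcop hM₁ hM₂]
      have e1 : ((x.val : ℕ) : ZMod c₂) = p.2 := by rw [hcast2 x, hpx]
      have e2 : (((x⁻¹).val : ℕ) : ZMod c₂) = (p.2)⁻¹ := by rw [hinv2 x hxu, hpx]
      have e3 : ((y.val : ℕ) : ZMod c₂) = q.2 := by rw [hcast2 y, hqy]
      have e4 : ((((M₁ : ZMod c₂) * q.2).val : ℕ) : ZMod c₂) = (M₁ : ZMod c₂) * q.2 :=
        ZMod.natCast_rightInverse _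
      have e5 : (((p.2⁻¹).val : ℕ) : ZMod c₂) = p.2⁻¹ := ZMod.natCast_rightInverse _
      have e6 : (((p.2).val : ℕ) : ZMod c₂) = p.2 := ZMod.natCast_rightInverse _
      have f1 : ((x.val : ℕ) : ZMod c₁) = p.1 := by rw [hcast1 x, hpx]
      have f2 : (((x⁻¹).val : ℕ) : ZMod c₁) = (p.1)⁻¹ := by rw [hinv1 x hxu, hpx]
      have f3 : ((y.val : ℕ) : ZMod c₁) = q.1 := by rw [hcast1 y, hqy]
      have f4 : ((((M₂ : ZMod c₁) * q.1).val : ℕ) : ZMod c₁) = (M₂ : ZMod c₁) * q.1 :=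
        ZMod.natCast_rightInverse _
      have f5 : (((p.1⁻¹).val : ℕ) : ZMod c₁) = p.1⁻¹ := ZMod.natCast_rightInverse _
      have f6 : (((p.1).val : ℕ) : ZMod c₁) = p.1 := ZMod.natCast_rightInverse _
      have A1 : EZ c₂ (M₁ * (n * (((x⁻¹).val : ℤ) + (x.val : ℤ))))
          = EZ c₂ ((n * M₁) * (((p.2⁻¹).val : ℤ) + ((p.2).val : ℤ))) := by
        apply EZ_congr hc₂0
        push_cast [e1, e2, e5, e6]
        ring
      have A2 : EZ c₂ (M₁ * ((m : ℤ) * ((x⁻¹).val : ℤ) * ((y.val : ℤ)) ^ 2 +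
            r * (((x⁻¹).val : ℤ) + δ) * (y.val : ℤ)))
          = EZ c₂ (((m * c₁ : ℕ) : ℤ) * ((p.2⁻¹).val : ℤ) * ((((M₁ : ZMod c₂) * q.2).val : ℤ)) ^ 2
              + r * (((p.2⁻¹).val : ℤ) + δ) * (((M₁ : ZMod c₂) * q.2).val : ℤ)) := by
        apply EZ_congr hc₂0
        push_cast [e2, e3, e4, e5]
        linear_combination (-(m : ZMod c₂) * (p.2)⁻¹ * (M₁ : ZMod c₂) * q.2 ^ 2) * hc₁M₁
      have B1 : EZ c₁ (M₂ * (n * (((x⁻¹).val : ℤ) + (x.val : ℤ))))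
          = EZ c₁ ((n * M₂) * (((p.1⁻¹).val : ℤ) + ((p.1).val : ℤ))) := by
        apply EZ_congr hc₁0
        push_cast [f1, f2, f5, f6]
        ring
      have B2 : EZ c₁ (M₂ * ((m : ℤ) * ((x⁻¹).val : ℤ) * ((y.val : ℤ)) ^ 2 +
            r * (((x⁻¹).val : ℤ) + δ) * (y.val : ℤ)))
          = EZ c₁ (((m * c₂ : ℕ) : ℤ) * ((p.1⁻¹).val : ℤ) * ((((M₂ : ZMod c₁) * q.1).val : ℤ)) ^ 2
              + r * (((p.1⁻¹).val : ℤ) + δ) * (((M₂ : ZMod c₁) * q.1).val : ℤ)) := by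
        apply EZ_congr hc₁0
        push_cast [f2, f3, f4, f5]
        linear_combination (-(m : ZMod c₁) * (p.1)⁻¹ * (M₂ : ZMod c₁) * q.1 ^ 2) * hc₂M₂
      rw [A1, A2, B1, B2]
      ring
    · rw [Gg, if_neg hxu]
      have hnand : ¬(IsUnit p.1 ∧ IsUnit p.2) := by
        rw [← hpx]
        exact fun h => hxu ((hunit x).mpr h)
      rcases not_and_or.mp hnand with h | h
      · have hz : Gg δ (m * c₂) c₁ (n * M₂) r p.1 ((M₂ : ZMod c₁) * q.1) = 0 := by
          rw [Gg, if_neg h]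
        rw [hz, mul_zero]
      · have hz : Gg δ (m * c₁) c₂ (n * M₁) r p.2 ((M₁ : ZMod c₂) * q.2) = 0 := by
          rw [Gg, if_neg h]
        rw [hz, zero_mul]
  calc Hkl δ m (c₁ * c₂) n r
      = ∑ ρ : ZMod (c₁ * c₂), ∑ l : ZMod (c₁ * c₂), Gg δ m (c₁ * c₂) n r ρ l :=
      Hkl_eq δ m (c₁ * c₂) n r
    _ = ∑ p : ZMod c₁ × ZMod c₂, ∑ q : ZMod c₁ × ZMod c₂,
          Gg δ m (c₁ * c₂) n r (φ.symm p) (φ.symm q) := by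
      refine Fintype.sum_equiv φ.toEquiv _ _ fun ρ => ?_
      refine Fintype.sum_equiv φ.toEquiv _ _ fun l => ?_
      have h1 : φ.symm (φ.toEquiv ρ) = ρ := φ.symm_apply_apply ρ
      have h2 : φ.symm (φ.toEquiv l) = l := φ.symm_apply_apply l
      rw [h1, h2]
    _ = ∑ p : ZMod c₁ × ZMod c₂, ∑ q : ZMod c₁ × ZMod c₂,
          Gg δ (m * c₁) c₂ (n * M₁) r p.2 ((M₁ : ZMod c₂) * q.2) *
            Gg δ (m * c₂) c₁ (n * M₂) r p.1 ((M₂ : ZMod c₁) * q.1) :=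
      Finset.sum_congr rfl fun p _ => Finset.sum_congr rfl fun q _ => key p q
    _ = ∑ p : ZMod c₁ × ZMod c₂, ∑ q : ZMod c₁ × ZMod c₂,
          Gg δ (m * c₁) c₂ (n * M₁) r p.2 q.2 * Gg δ (m * c₂) c₁ (n * M₂) r p.1 q.1 := by
      refine Finset.sum_congr rfl fun p _ => ?_
      refine Fintype.sum_equiv (Equiv.prodCongr (Units.mulLeft hUM₂.unit)
        (Units.mulLeft hUM₁.unit)) _ _ fun q => ?_
      show Gg δ (m * c₁) c₂ (n * M₁) r p.2 ((M₁ : ZMod c₂) * q.2) *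
            Gg δ (m * c₂) c₁ (n * M₂) r p.1 ((M₂ : ZMod c₁) * q.1)
          = Gg δ (m * c₁) c₂ (n * M₁) r p.2 ((hUM₁.unit : ZMod c₂) * q.2) *
            Gg δ (m * c₂) c₁ (n * M₂) r p.1 ((hUM₂.unit : ZMod c₁) * q.1)
      rw [IsUnit.unit_spec, IsUnit.unit_spec]
    _ = ∑ p : ZMod c₁ × ZMod c₂,
          (∑ l₂ : ZMod c₂, Gg δ (m * c₁) c₂ (n * M₁) r p.2 l₂) *
            (∑ l₁ : ZMod c₁, Gg δ (m * c₂) c₁ (n * M₂) r p.1 l₁) :=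
      Finset.sum_congr rfl fun p _ => sum_prod_mul _ _
    _ = (∑ ρ₂ : ZMod c₂, ∑ l₂ : ZMod c₂, Gg δ (m * c₁) c₂ (n * M₁) r ρ₂ l₂) *
          (∑ ρ₁ : ZMod c₁, ∑ l₁ : ZMod c₁, Gg δ (m * c₂) c₁ (n * M₂) r ρ₁ l₁) :=
      sum_prod_mul (fun ρ₂ => ∑ l₂ : ZMod c₂, Gg δ (m * c₁) c₂ (n * M₁) r ρ₂ l₂)
        (fun ρ₁ => ∑ l₁ : ZMod c₁, Gg δ (m * c₂) c₁ (n * M₂) r ρ₁ l₁)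
    _ = Hkl δ (m * c₁) c₂ (n * M₁) r * Hkl δ (m * c₂) c₁ (n * M₂) r := by
      rw [Hkl_eq, Hkl_eq]
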